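/- An upper triangular matrix A = (α_{ij}) in M_n(ℂ) (with α_{ij} = 0 for i > j) is strongly irreducible (i.e., for every invertible X in M_n(ℂ), the commutant of X A X⁻¹ contains no orthogonal projections other than 0 and I) if and only if all diagonal entries are equal (α_{11} = α_{22} = ⋯ = α_{nn}) and all superdiagonal entries are nonzero (α_{i,i+1} ≠ 0 for 1 ≤ i ≤ n−1). -/

import Mathlib

open Matrix

variable {n : ℕ}

lemma pow_entry_zero (N : Matrix (Fin n) (Fin n) ℂ)
    (h : ∀ i j : Fin n, (j : ℕ) ≤ (i : ℕ) → N i j = 0) :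
    ∀ m, ∀ i j : Fin n, (j : ℕ) < (i : ℕ) + m → (N ^ m) i j = 0 := by
  intro m
  induction m with
  | zero =>
    intro i j hj
    rw [pow_zero]
    exact Matrix.one_apply_ne (fun hij => by rw [hij] at hj; omega)
  | succ m ih =>
    intro i j hj
    rw [pow_succ, Matrix.mul_apply]
    apply Finset.sum_eq_zero
    intro l _
    by_cases hl : (l : ℕ) < (i : ℕ) + m
    · rw [ih i l hl, zero_mul]
    · rw [h l j (by omega), mul_zero]

/-- refined: if additionally the (k,k+1) entry vanishes, crossing paths need one more step. -/
lemma pow_entry_zero_cross (N : Matrix (Fin n) (Fin n) ℂ)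
    (h : ∀ i j : Fin n, (j : ℕ) ≤ (i : ℕ) → N i j = 0)
    (k : Fin n) (hk1 : (k : ℕ) + 1 < n) (hk : N k ⟨(k : ℕ) + 1, hk1⟩ = 0) :
    ∀ m, ∀ i j : Fin n, (i : ℕ) ≤ k → (k : ℕ) < (j : ℕ) → (j : ℕ) < (i : ℕ) + m + 1 →
      (N ^ m) i j = 0 := by
  intro m
  induction m with
  | zero => intro i j h1 h2 h3; omega
  | succ m ih =>
    intro i j h1 h2 h3
    rw [pow_succ, Matrix.mul_apply]
    apply Finset.sum_eq_zero
    intro l _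
    by_cases hl1 : (j : ℕ) ≤ (l : ℕ)
    · rw [h l j hl1, mul_zero]
    by_cases hl2 : (l : ℕ) < (i : ℕ) + m
    · rw [pow_entry_zero N h m i l hl2, zero_mul]
    -- now l = i + m, j = i + m + 1 (up to bounds)
    by_cases hl3 : (k : ℕ) < (l : ℕ)
    · rw [ih i l h1 hl3 (by omega), zero_mul]
    · -- l ≤ k < j ≤ l + 1 so k = l and j = k+1
      have hkl : (l : ℕ) = (k : ℕ) := by omega
      have hjk : (j : ℕ) = (k : ℕ) + 1 := by omega
      have hlk : l = k := Fin.ext hkl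
      have hjj : j = (⟨(k : ℕ) + 1, hk1⟩ : Fin n) := Fin.ext hjk
      rw [hlk, hjj, hk, mul_zero]

/-- nonzero superdiagonal entries give a nonzero entry on the m-th superdiagonal of `N^m`. -/
lemma pow_entry_ne_zero (N : Matrix (Fin n) (Fin n) ℂ)
    (h : ∀ i j : Fin n, (j : ℕ) ≤ (i : ℕ) → N i j = 0)
    (hs : ∀ i : Fin n, ∀ hi : (i : ℕ) + 1 < n, N i ⟨(i : ℕ) + 1, hi⟩ ≠ 0) :
    ∀ m, ∀ i j : Fin n, (j : ℕ) = (i : ℕ) + m → (N ^ m) i j ≠ 0 := by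
  intro m
  induction m with
  | zero =>
    intro i j hj
    have : i = j := Fin.ext (by omega)
    rw [pow_zero, this, Matrix.one_apply_eq]
    exact one_ne_zero
  | succ m ih =>
    intro i j hj
    have hlm : (i : ℕ) + m < n := by omega
    set l0 : Fin n := ⟨(i : ℕ) + m, hlm⟩ with hl0
    rw [pow_succ, Matrix.mul_apply]
    rw [Finset.sum_eq_single l0]
    · apply mul_ne_zero
      · exact ih i l0 rfl
      · have hj' : (j : ℕ) = (l0 : ℕ) + 1 := by simp [hl0]; omega
        have hb : (l0 : ℕ) + 1 < n := by omega
        have : j = (⟨(l0 : ℕ) + 1, hb⟩ : Fin n) := Fin.ext hj'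
        rw [this]; exact hs l0 hb
    · intro l _ hne
      by_cases hc : (l : ℕ) < (i : ℕ) + m
      · rw [pow_entry_zero N h m i l hc, zero_mul]
      · have : (j : ℕ) ≤ (l : ℕ) := by
          have : (l : ℕ) ≠ (i : ℕ) + m := fun he => hne (Fin.ext (by simp [hl0, he]))
          omega
        rw [h l j this, mul_zero]
    · intro hmem; exact absurd (Finset.mem_univ l0) hmem

/-- Key independence lemma: coefficients of a combination of `N^i *ᵥ v` that is
"orthogonal to the dual cyclic family" must vanish. -/
lemma key_indep (N : Matrix (Fin n) (Fin n) ℂ) (v : Fin n → ℂ) (a : Fin n) (m : ℕ)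
    (h1 : ∀ j, m ≤ j → ((N ^ j) *ᵥ v) a = 0)
    (h2 : ((N ^ (m - 1)) *ᵥ v) a ≠ 0) (hm : 1 ≤ m)
    (c : Fin m → ℂ)
    (hW : ∀ j : ℕ, ((N ^ j) *ᵥ (∑ i : Fin m, c i • ((N ^ (i : ℕ)) *ᵥ v))) a = 0) :
    ∀ i, c i = 0 := by
  have expand : ∀ j : ℕ, ((N ^ j) *ᵥ (∑ i : Fin m, c i • ((N ^ (i : ℕ)) *ᵥ v)))
      = ∑ i : Fin m, c i • ((N ^ (j + (i : ℕ))) *ᵥ v) := by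
    intro j
    rw [← Matrix.mulVecLin_apply, map_sum]
    refine Finset.sum_congr rfl fun i _ => ?_
    rw [_root_.map_smul, Matrix.mulVecLin_apply, Matrix.mulVec_mulVec, ← pow_add]
  by_contra hc
  push_neg at hc
  obtain ⟨i1, hi1⟩ := hc
  have hex : ∃ t : ℕ, ∃ ht : t < m, c ⟨t, ht⟩ ≠ 0 := ⟨i1, i1.isLt, by simpa using hi1⟩
  classical
  let i0 := Nat.find hex
  obtain ⟨hi0m, hi0⟩ : ∃ ht : i0 < m, c ⟨i0, ht⟩ ≠ 0 := Nat.find_spec hex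
  have hmin : ∀ t, t < i0 → ∀ ht : t < m, c ⟨t, ht⟩ = 0 := by
    intro t ht htm
    have hmt := Nat.find_min hex ht
    push_neg at hmt
    exact hmt htm
  have := hW (m - 1 - i0)
  rw [expand] at this
  rw [Finset.sum_apply] at this
  rw [Finset.sum_eq_single (⟨i0, hi0m⟩ : Fin m)] at this
  · have hpow : m - 1 - i0 + (i0 : ℕ) = m - 1 := by omega
    rw [Pi.smul_apply, hpow] at this
    exact hi0 (by simpa [h2] using (mul_eq_zero.mp this).resolve_right h2)
  · intro i _ hne
    rcases lt_or_gt_of_ne (fun he : (i : ℕ) = i0 => hne (Fin.ext he)) with hlt | hgt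
    · rw [Pi.smul_apply, hmin i hlt i.isLt]
      simp
    · rw [Pi.smul_apply, h1 _ (by omega)]
      simp
  · intro hmem; exact absurd (Finset.mem_univ _) hmem

/-- An idempotent upper triangular-with-constant-0/1-type argument:
idempotent powers. -/
lemma idem_pow {E : Matrix (Fin n) (Fin n) ℂ} (hE : E * E = E) :
    ∀ m, 1 ≤ m → E ^ m = E := by
  intro m
  induction m with
  | zero => omega
  | succ m ih =>
    intro _
    by_cases h : m = 0
    · subst h; rw [pow_one]
    · rw [pow_succ, ih (by omega), hE]

/-- Core of the "if" direction: an idempotent commuting with a matrix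
with constant diagonal and nonzero superdiagonal entries is trivial. -/
lemma idem_trivial (hn : 0 < n) (A : Matrix (Fin n) (Fin n) ℂ)
    (hupper : ∀ i j : Fin n, (j : ℕ) < (i : ℕ) → A i j = 0)
    (hdiag : ∀ i j : Fin n, A i i = A j j)
    (hsuper : ∀ i : Fin n, ∀ h : (i : ℕ) + 1 < n, A i ⟨(i : ℕ) + 1, h⟩ ≠ 0)
    (E : Matrix (Fin n) (Fin n) ℂ) (hE : E * E = E) (hcomm : A * E = E * A) :
    E = 0 ∨ E = 1 := by
  classical
  set a0 : Fin n := ⟨0, hn⟩ with ha0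
  set α : ℂ := A a0 a0 with hα
  set N : Matrix (Fin n) (Fin n) ℂ := A - α • 1 with hN
  have hNs : ∀ i j : Fin n, (j : ℕ) ≤ (i : ℕ) → N i j = 0 := by
    intro i j hij
    rcases Nat.lt_or_ge (j : ℕ) (i : ℕ) with h | h
    · have hne : a0 ≠ a0 ∨ True := Or.inr trivial
      have : i ≠ j := fun he => by rw [he] at h; omega
      simp [hN, hupper i j h, Matrix.one_apply_ne (Ne.symm (fun he => this he.symm))]
    · have : i = j := Fin.ext (by omega)
      subst this
      simp [hN, hα, hdiag i a0]
  have hNsuper : ∀ i : Fin n, ∀ h : (i : ℕ) + 1 < n, N i ⟨(i : ℕ) + 1, h⟩ ≠ 0 := by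
    intro i h
    have : i ≠ (⟨(i : ℕ) + 1, h⟩ : Fin n) := fun he => by
      have := congrArg Fin.val he; simp at this
    simp [hN, Matrix.one_apply_ne this]
    exact hsuper i h
  have hNcomm : N * E = E * N := by
    simp only [hN, Matrix.sub_mul, Matrix.mul_sub, Matrix.smul_mul, Matrix.mul_smul,
      Matrix.one_mul, Matrix.mul_one, hcomm]
  have hEcommPow : ∀ m : ℕ, (N ^ m) * E = E * (N ^ m) := by
    intro m
    induction m with
    | zero => simp
    | succ m ih => rw [pow_succ, Matrix.mul_assoc, hNcomm, ← Matrix.mul_assoc, ih,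
        Matrix.mul_assoc]
  have hNpow : ∀ m : ℕ, n ≤ m → N ^ m = 0 := by
    intro m hm
    ext i j
    rw [pow_entry_zero N hNs m i j (by omega)]
    simp
  set last : Fin n := ⟨n - 1, by omega⟩ with hlast
  set v : Fin n → ℂ := Pi.single last 1 with hv
  have hva : ∀ m : ℕ, ((N ^ m) *ᵥ v) a0 = (N ^ m) a0 last := by
    intro m; simp [hv]
  have h2 : ((N ^ (n - 1)) *ᵥ v) a0 ≠ 0 := by
    rw [hva]
    exact pow_entry_ne_zero N hNs hNsuper (n - 1) a0 last (by simp [hlast, ha0])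
  have h1 : ∀ j, n ≤ j → ((N ^ j) *ᵥ v) a0 = 0 := by
    intro j hj; rw [hNpow j hj]; simp
  -- the cyclic family is a basis
  set w : Fin n → (Fin n → ℂ) := fun i => (N ^ (i : ℕ)) *ᵥ v with hw
  have hindep : LinearIndependent ℂ w := by
    rw [Fintype.linearIndependent_iff]
    intro c hc
    exact key_indep N v a0 n h1 h2 hn c (by intro j; rw [hc]; simp)
  have hcard : Fintype.card (Fin n) = Module.finrank ℂ (Fin n → ℂ) := by
    simp [Module.finrank_fintype_fun_eq_card]
  have hne : Nonempty (Fin n) := ⟨a0⟩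
  set B := basisOfLinearIndependentOfCardEqFinrank hindep hcard with hB
  have hBcoe : ∀ i, B i = w i := fun i => by
    rw [hB, coe_basisOfLinearIndependentOfCardEqFinrank]
  set p : Fin n → ℂ := fun i => B.repr (E *ᵥ v) i with hp
  have hEv : E *ᵥ v = ∑ i : Fin n, p i • w i := by
    conv_lhs => rw [← B.sum_repr (E *ᵥ v)]
    exact Finset.sum_congr rfl fun i _ => by rw [hBcoe, hp]
  set Q : Matrix (Fin n) (Fin n) ℂ := ∑ i : Fin n, p i • N ^ (i : ℕ) with hQ
  have hQpow : ∀ m : ℕ, Q * (N ^ m) = (N ^ m) * Q := by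
    intro m
    rw [hQ, Finset.sum_mul, Finset.mul_sum]
    refine Finset.sum_congr rfl fun i _ => ?_
    rw [Matrix.smul_mul, Matrix.mul_smul, pow_mul_comm]
  have hsumMV : ∀ s : Finset (Fin n),
      (∑ i ∈ s, p i • N ^ (i : ℕ)) *ᵥ v = ∑ i ∈ s, p i • ((N ^ (i : ℕ)) *ᵥ v) := by
    intro s
    induction s using Finset.induction_on with
    | empty => simp
    | insert _ _ h ih =>
      rw [Finset.sum_insert h, Finset.sum_insert h, Matrix.add_mulVec,
        Matrix.smul_mulVec, ih]
  have hQv : Q *ᵥ v = E *ᵥ v := by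
    rw [hQ, hsumMV, hEv]
  have hEQ : E = Q := by
    have hlin : E.mulVecLin = Q.mulVecLin := by
      apply B.ext
      intro i
      rw [Matrix.mulVecLin_apply, Matrix.mulVecLin_apply, hBcoe, hw]
      calc E *ᵥ ((N ^ (i : ℕ)) *ᵥ v) = (E * N ^ (i : ℕ)) *ᵥ v := by
            rw [Matrix.mulVec_mulVec]
        _ = (N ^ (i : ℕ)) *ᵥ (E *ᵥ v) := by rw [← hEcommPow, ← Matrix.mulVec_mulVec]
        _ = (N ^ (i : ℕ)) *ᵥ (Q *ᵥ v) := by rw [hQv]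
        _ = (Q * N ^ (i : ℕ)) *ᵥ v := by rw [hQpow, ← Matrix.mulVec_mulVec]
        _ = Q *ᵥ ((N ^ (i : ℕ)) *ᵥ v) := by rw [← Matrix.mulVec_mulVec]
    ext i j
    have hfi := congrFun (DFunLike.congr_fun hlin (Pi.single j 1)) i
    simpa [Matrix.mulVecLin_apply] using hfi
  -- E is upper triangular with constant diagonal
  have hEupper : ∀ i j : Fin n, (j : ℕ) < (i : ℕ) → E i j = 0 := by
    intro i j hij
    rw [hEQ, hQ]
    rw [Matrix.sum_apply]
    apply Finset.sum_eq_zero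
    intro t _
    rw [Matrix.smul_apply, pow_entry_zero N hNs t i j (by omega), smul_zero]
  have hEdiag : ∀ i : Fin n, E i i = p a0 := by
    intro i
    rw [hEQ, hQ, Matrix.sum_apply]
    rw [Finset.sum_eq_single a0]
    · rw [Matrix.smul_apply]
      have : ((a0 : Fin n) : ℕ) = 0 := rfl
      rw [this, pow_zero, Matrix.one_apply_eq, smul_eq_mul, mul_one]
    · intro t _ ht
      have htpos : 0 < (t : ℕ) := Nat.pos_of_ne_zero (fun h => ht (Fin.ext h))
      rw [Matrix.smul_apply, pow_entry_zero N hNs (t : ℕ) i i (by omega), smul_zero]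
    · intro hmem; exact absurd (Finset.mem_univ _) hmem
  -- diagonal entry is idempotent
  have hdiagIdem : p a0 * p a0 = p a0 := by
    have := congrArg (fun M => M a0 a0) hE
    simp only [Matrix.mul_apply] at this
    rw [Finset.sum_eq_single a0] at this
    · rw [hEdiag a0] at this; exact this
    · intro l _ hl
      have hl0 : ((a0 : Fin n) : ℕ) < (l : ℕ) := by
        have : (l : ℕ) ≠ 0 := fun he => hl (Fin.ext he)
        simp only [ha0]
        omega
      rw [hEupper l a0 hl0, mul_zero]
    · intro hmem; exact absurd (Finset.mem_univ _) hmem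
  have hc01 : p a0 = 0 ∨ p a0 = 1 := by
    have hz : p a0 * (p a0 - 1) = 0 := by rw [mul_sub, hdiagIdem]; ring
    rcases mul_eq_zero.mp hz with h | h
    · exact Or.inl h
    · exact Or.inr (by linear_combination h)
  rcases hc01 with hc | hc
  · left
    -- E is strictly upper triangular hence nilpotent, and idempotent, so zero
    have hEs : ∀ i j : Fin n, (j : ℕ) ≤ (i : ℕ) → E i j = 0 := by
      intro i j hij
      rcases Nat.lt_or_ge (j : ℕ) (i : ℕ) with h | h
      · exact hEupper i j h
      · have : i = j := Fin.ext (by omega)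
        rw [this, hEdiag, hc]
    have hEn : E ^ n = 0 := by
      ext i j
      rw [pow_entry_zero E hEs n i j (by omega)]
      simp
    rw [← idem_pow hE n hn, hEn]
  · right
    set F : Matrix (Fin n) (Fin n) ℂ := 1 - E with hF
    have hFidem : F * F = F := by
      rw [hF]
      simp only [Matrix.sub_mul, Matrix.mul_sub, Matrix.one_mul, Matrix.mul_one, hE]
      abel
    have hFs : ∀ i j : Fin n, (j : ℕ) ≤ (i : ℕ) → F i j = 0 := by
      intro i j hij
      rcases Nat.lt_or_ge (j : ℕ) (i : ℕ) with h | h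
      · have hne : i ≠ j := fun he => by rw [he] at h; omega
        simp [hF, hEupper i j h, Matrix.one_apply_ne hne]
      · have : i = j := Fin.ext (by omega)
        rw [this]
        simp [hF, hEdiag, hc]
    have hFn : F ^ n = 0 := by
      ext i j
      rw [pow_entry_zero F hFs n i j (by omega)]
      simp
    have : F = 0 := by rw [← idem_pow hFidem n hn, hFn]
    rw [hF] at this
    have := sub_eq_zero.mp this
    exact this.symm

/-- From a nontrivial invariant complementary pair, produce a conjugation and a
nontrivial orthogonal projection commuting with the conjugated matrix. -/
lemma not_SI_of_decomp (A : Matrix (Fin n) (Fin n) ℂ)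
    (V W : Submodule ℂ (Fin n → ℂ)) (hc : IsCompl V W) (hV : V ≠ ⊥) (hW : W ≠ ⊥)
    (hAV : ∀ x ∈ V, A *ᵥ x ∈ V) (hAW : ∀ x ∈ W, A *ᵥ x ∈ W) :
    ∃ X : Matrix (Fin n) (Fin n) ℂ, IsUnit X ∧
      ∃ P : Matrix (Fin n) (Fin n) ℂ, P * P = P ∧ P.conjTranspose = P ∧
        (X * A * X⁻¹) * P = P * (X * A * X⁻¹) ∧ ¬(P = 0 ∨ P = 1) := by
  classical
  set r := Module.finrank ℂ V with hr
  set s := Module.finrank ℂ W with hs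
  have hrs : r + s = n := by
    rw [hr, hs, Submodule.finrank_add_eq_of_isCompl hc]
    simp [Module.finrank_fintype_fun_eq_card]
  set bV : Module.Basis (Fin r) ℂ V := Module.finBasis ℂ V with hbV
  set bW : Module.Basis (Fin s) ℂ W := Module.finBasis ℂ W with hbW
  set e0 := Submodule.prodEquivOfIsCompl V W hc with he0
  set B0 : Module.Basis (Fin r ⊕ Fin s) ℂ (Fin n → ℂ) := (bV.prod bW).map e0 with hB0
  set eidx : Fin r ⊕ Fin s ≃ Fin n := finSumFinEquiv.trans (finCongr hrs) with heidx
  set B : Module.Basis (Fin n) ℂ (Fin n → ℂ) := B0.reindex eidx with hB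
  -- representation vanishing facts
  have hreprW : ∀ x : Fin n → ℂ, x ∈ V → ∀ j : Fin s, B.repr x (eidx (Sum.inr j)) = 0 := by
    intro x hx j
    rw [hB, Module.Basis.repr_reindex_apply, Equiv.symm_apply_apply, hB0, Module.Basis.map_repr]
    simp only [LinearEquiv.trans_apply]
    rw [Module.Basis.prod_repr_inr]
    have hsymm : e0.symm x = (⟨x, hx⟩, 0) := by
      rw [LinearEquiv.symm_apply_eq, he0]
      simp
    rw [hsymm]
    simp only []
    rw [map_zero]
    rfl
  have hreprV : ∀ x : Fin n → ℂ, x ∈ W → ∀ i : Fin r, B.repr x (eidx (Sum.inl i)) = 0 := by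
    intro x hx i
    rw [hB, Module.Basis.repr_reindex_apply, Equiv.symm_apply_apply, hB0, Module.Basis.map_repr]
    simp only [LinearEquiv.trans_apply]
    rw [Module.Basis.prod_repr_inl]
    have hsymm : e0.symm x = (0, ⟨x, hx⟩) := by
      rw [LinearEquiv.symm_apply_eq, he0]
      simp
    rw [hsymm]
    simp only []
    rw [map_zero]
    rfl
  have hBmemV : ∀ i : Fin r, B (eidx (Sum.inl i)) ∈ V := by
    intro i
    rw [hB, Module.Basis.reindex_apply, Equiv.symm_apply_apply, hB0, Module.Basis.map_apply]
    have : (bV.prod bW) (Sum.inl i) = (bV i, 0) :=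
      Prod.ext (Module.Basis.prod_apply_inl_fst _ _ _) (Module.Basis.prod_apply_inl_snd _ _ _)
    rw [this, he0, Submodule.coe_prodEquivOfIsCompl']
    simp
  have hBmemW : ∀ j : Fin s, B (eidx (Sum.inr j)) ∈ W := by
    intro j
    rw [hB, Module.Basis.reindex_apply, Equiv.symm_apply_apply, hB0, Module.Basis.map_apply]
    have : (bV.prod bW) (Sum.inr j) = (0, bW j) :=
      Prod.ext (Module.Basis.prod_apply_inr_fst _ _ _) (Module.Basis.prod_apply_inr_snd _ _ _)
    rw [this, he0, Submodule.coe_prodEquivOfIsCompl']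
    simp
  -- the conjugating matrix
  set std : Module.Basis (Fin n) ℂ (Fin n → ℂ) := Pi.basisFun ℂ (Fin n) with hstd
  set X := LinearMap.toMatrix std B LinearMap.id with hX
  set Y := LinearMap.toMatrix B std LinearMap.id with hY
  have hXY : X * Y = 1 := by
    rw [hX, hY, ← LinearMap.toMatrix_comp, LinearMap.id_comp, LinearMap.toMatrix_id]
  have hYX : Y * X = 1 := by
    rw [hX, hY, ← LinearMap.toMatrix_comp, LinearMap.id_comp, LinearMap.toMatrix_id]
  have hXunit : IsUnit X := ⟨⟨X, Y, hXY, hYX⟩, rfl⟩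
  have hXinv : X⁻¹ = Y := Matrix.inv_eq_right_inv hXY
  -- the conjugated matrix is the matrix of mulVecLin A in basis B
  have hXAY : X * A * X⁻¹ = LinearMap.toMatrix B B A.mulVecLin := by
    rw [hXinv, hX, hY]
    have hA : A = LinearMap.toMatrix std std A.mulVecLin := by
      rw [hstd, LinearMap.toMatrix_eq_toMatrix', ← Matrix.toLin'_apply' A,
        LinearMap.toMatrix'_toLin']
    conv_lhs => rw [hA]
    rw [← LinearMap.toMatrix_comp std std B, ← LinearMap.toMatrix_comp B std B,
      LinearMap.id_comp, LinearMap.comp_id]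
  -- the projection
  set d : Fin n → ℂ := fun i => if (eidx.symm i).isLeft then 1 else 0 with hd
  set P : Matrix (Fin n) (Fin n) ℂ := Matrix.diagonal d with hP
  have hd01 : ∀ i, d i = 0 ∨ d i = 1 := fun i => by
    by_cases h : (eidx.symm i).isLeft <;> simp [hd, h]
  have hPidem : P * P = P := by
    rw [hP, Matrix.diagonal_mul_diagonal]
    ext i j
    rcases eq_or_ne i j with rfl | hne
    · rw [Matrix.diagonal_apply_eq, Matrix.diagonal_apply_eq]
      rcases hd01 i with h | h <;> simp [h]
    · rw [Matrix.diagonal_apply_ne _ hne, Matrix.diagonal_apply_ne _ hne]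
  have hPherm : P.conjTranspose = P := by
    rw [hP, Matrix.diagonal_conjTranspose]
    ext i j
    rcases eq_or_ne i j with rfl | hne
    · rw [Matrix.diagonal_apply_eq, Matrix.diagonal_apply_eq]
      rcases hd01 i with h | h <;> simp [h]
    · rw [Matrix.diagonal_apply_ne _ hne, Matrix.diagonal_apply_ne _ hne]
  have hcomm : (X * A * X⁻¹) * P = P * (X * A * X⁻¹) := by
    rw [hXAY, hP]
    ext i j
    rw [Matrix.mul_diagonal, Matrix.diagonal_mul]
    by_cases hij : d i = d j
    · rw [hij]; ring
    · have hzero : LinearMap.toMatrix B B A.mulVecLin i j = 0 := by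
        rw [LinearMap.toMatrix_apply]
        rcases hsj : eidx.symm j with jl | jr
        · -- B j ∈ V, so f (B j) ∈ V; i must be a W-index (else d i = d j)
          rcases hsi : eidx.symm i with il | ir
          · exact absurd (by rw [hd]; simp [hsi, hsj]) hij
          · have hBj : B j ∈ V := by
              have : j = eidx (Sum.inl jl) := by
                rw [← hsj, Equiv.apply_symm_apply]
              rw [this]; exact hBmemV jl
            have hfV : A.mulVecLin (B j) ∈ V := hAV _ hBj
            have : i = eidx (Sum.inr ir) := by rw [← hsi, Equiv.apply_symm_apply]
            rw [this]
            exact hreprW _ hfV ir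
        · rcases hsi : eidx.symm i with il | ir
          · have hBj : B j ∈ W := by
              have : j = eidx (Sum.inr jr) := by
                rw [← hsj, Equiv.apply_symm_apply]
              rw [this]; exact hBmemW jr
            have hfW : A.mulVecLin (B j) ∈ W := hAW _ hBj
            have : i = eidx (Sum.inl il) := by rw [← hsi, Equiv.apply_symm_apply]
            rw [this]
            exact hreprV _ hfW il
          · exact absurd (by rw [hd]; simp [hsi, hsj]) hij
      rw [hzero, zero_mul, mul_zero]
  refine ⟨X, hXunit, P, hPidem, hPherm, hcomm, ?_⟩
  have hr0 : 0 < r := by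
    rw [hr]
    have : Nontrivial V := Submodule.nontrivial_iff_ne_bot.mpr hV
    exact Module.finrank_pos
  have hs0 : 0 < s := by
    rw [hs]
    have : Nontrivial W := Submodule.nontrivial_iff_ne_bot.mpr hW
    exact Module.finrank_pos
  rintro (h0 | h1)
  · have := congrArg (fun M => M (eidx (Sum.inl ⟨0, hr0⟩)) (eidx (Sum.inl ⟨0, hr0⟩))) h0
    simp only [hP, Matrix.diagonal_apply_eq, Matrix.zero_apply, hd,
      Equiv.symm_apply_apply] at this
    simp at this
  · have := congrArg (fun M => M (eidx (Sum.inr ⟨0, hs0⟩)) (eidx (Sum.inr ⟨0, hs0⟩))) h1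
    simp only [hP, Matrix.diagonal_apply_eq, Matrix.one_apply_eq, hd,
      Equiv.symm_apply_apply] at this
    simp at this

/-- A nilpotent matrix of nilpotency index `m < n` admits a nontrivial invariant
complementary pair of subspaces. -/
lemma cyclic_decomp (N : Matrix (Fin n) (Fin n) ℂ) (m : ℕ) (hm1 : 1 ≤ m) (hmn : m < n)
    (hNm : N ^ m = 0) (hNm1 : N ^ (m - 1) ≠ 0) :
    ∃ V W : Submodule ℂ (Fin n → ℂ), IsCompl V W ∧ V ≠ ⊥ ∧ W ≠ ⊥ ∧
      (∀ x ∈ V, N *ᵥ x ∈ V) ∧ (∀ x ∈ W, N *ᵥ x ∈ W) := by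
  classical
  -- choose a nonzero entry of N ^ (m-1)
  have hab : ∃ a b : Fin n, (N ^ (m - 1)) a b ≠ 0 := by
    by_contra h
    push_neg at h
    exact hNm1 (by ext a b; rw [h a b]; simp)
  obtain ⟨a, b, hab⟩ := hab
  set v : Fin n → ℂ := Pi.single b 1 with hv
  have h2 : ((N ^ (m - 1)) *ᵥ v) a ≠ 0 := by simp [hv, hab]
  have hNj : ∀ j, m ≤ j → N ^ j = 0 := by
    intro j hj
    have : N ^ j = N ^ m * N ^ (j - m) := by rw [← pow_add]; congr 1; omega
    rw [this, hNm, Matrix.zero_mul]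
  have h1 : ∀ j, m ≤ j → ((N ^ j) *ᵥ v) a = 0 := by
    intro j hj; rw [hNj j hj]; simp
  set wfam : Fin m → (Fin n → ℂ) := fun i => (N ^ (i : ℕ)) *ᵥ v with hwfam
  set Z : Submodule ℂ (Fin n → ℂ) := Submodule.span ℂ (Set.range wfam) with hZ
  set W : Submodule ℂ (Fin n → ℂ) :=
    ⨅ j : ℕ, LinearMap.ker ((LinearMap.proj a : (Fin n → ℂ) →ₗ[ℂ] ℂ).comp
      (N ^ j).mulVecLin) with hW
  have hWmem : ∀ x, x ∈ W ↔ ∀ j : ℕ, ((N ^ j) *ᵥ x) a = 0 := by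
    intro x
    rw [hW]
    simp [Submodule.mem_iInf, LinearMap.mem_ker, Matrix.mulVecLin_apply]
  -- linear independence of the cyclic family
  have hindep : LinearIndependent ℂ wfam := by
    rw [Fintype.linearIndependent_iff]
    intro c hc
    exact key_indep N v a m h1 h2 hm1 c (by intro j; rw [hwfam] at hc; rw [hc]; simp)
  have hfinZ : Module.finrank ℂ Z = m := by
    rw [hZ, finrank_span_eq_card hindep, Fintype.card_fin]
  -- disjointness
  have hdisj : Disjoint Z W := by
    rw [Submodule.disjoint_def]
    intro x hxZ hxW
    rw [hZ] at hxZ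
    obtain ⟨c, hc⟩ := (Submodule.mem_span_range_iff_exists_fun ℂ).mp hxZ
    have hc0 : ∀ i, c i = 0 := by
      apply key_indep N v a m h1 h2 hm1 c
      intro j
      rw [hwfam] at hc
      rw [hc]
      exact (hWmem x).mp hxW j
    rw [← hc]
    apply Finset.sum_eq_zero
    intro i _
    rw [hc0 i, zero_smul]
  -- W has corank at most m
  have hfinW : n - m ≤ Module.finrank ℂ W := by
    set Φ : (Fin n → ℂ) →ₗ[ℂ] (Fin m → ℂ) :=
      LinearMap.pi (fun i : Fin m => (LinearMap.proj a).comp (N ^ (i : ℕ)).mulVecLin) with hΦ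
    have hWker : W = LinearMap.ker Φ := by
      ext x
      rw [hWmem, LinearMap.mem_ker, hΦ]
      constructor
      · intro h
        funext i
        simpa [LinearMap.pi_apply, Matrix.mulVecLin_apply] using h (i : ℕ)
      · intro h j
        by_cases hj : j < m
        · have := congrFun h ⟨j, hj⟩
          simpa [LinearMap.pi_apply, Matrix.mulVecLin_apply] using this
        · rw [hNj j (by omega)]; simp
    have hrn := LinearMap.finrank_range_add_finrank_ker Φ
    have hrange : Module.finrank ℂ (LinearMap.range Φ) ≤ m := by
      have := Submodule.finrank_le (LinearMap.range Φ)
      simpa [Module.finrank_fintype_fun_eq_card] using this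
    have hdom : Module.finrank ℂ (Fin n → ℂ) = n := by
      simp [Module.finrank_fintype_fun_eq_card]
    rw [hWker]
    omega
  -- complementarity
  have htop : Z ⊔ W = ⊤ := by
    apply Submodule.eq_top_of_finrank_eq
    have hsum := Submodule.finrank_sup_add_finrank_inf_eq Z W
    rw [hdisj.eq_bot] at hsum
    simp only [finrank_bot, add_zero] at hsum
    have hle : Module.finrank ℂ ((Z ⊔ W : Submodule ℂ (Fin n → ℂ))) ≤
        Module.finrank ℂ (Fin n → ℂ) := Submodule.finrank_le _
    have hdom : Module.finrank ℂ (Fin n → ℂ) = n := by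
      simp [Module.finrank_fintype_fun_eq_card]
    omega
  have hcompl : IsCompl Z W := ⟨hdisj, codisjoint_iff.mpr htop⟩
  -- nontriviality
  have hZbot : Z ≠ ⊥ := by
    intro h
    rw [h, finrank_bot] at hfinZ
    omega
  have hWbot : W ≠ ⊥ := by
    intro h
    rw [h, finrank_bot] at hfinW
    omega
  -- invariance
  have hZinv : ∀ x ∈ Z, N *ᵥ x ∈ Z := by
    intro x hx
    rw [hZ] at hx ⊢
    induction hx using Submodule.span_induction with
    | mem y hy =>
      obtain ⟨i, rfl⟩ := hy
      rw [hwfam]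
      simp only []
      rw [Matrix.mulVec_mulVec, ← pow_succ']
      by_cases hi : (i : ℕ) + 1 < m
      · exact Submodule.subset_span ⟨⟨(i : ℕ) + 1, hi⟩, rfl⟩
      · have : (i : ℕ) + 1 = m := by have := i.isLt; omega
        rw [this, hNm]
        simp
    | zero => simp
    | add y z hy hz hy' hz' => rw [Matrix.mulVec_add]; exact Submodule.add_mem _ hy' hz'
    | smul t y hy hy' => rw [Matrix.mulVec_smul]; exact Submodule.smul_mem _ t hy'
  have hWinv : ∀ x ∈ W, N *ᵥ x ∈ W := by
    intro x hx
    rw [hWmem] at hx ⊢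
    intro j
    rw [Matrix.mulVec_mulVec, ← pow_succ]
    exact hx (j + 1)
  exact ⟨Z, W, hcompl, hZbot, hWbot, hZinv, hWinv⟩

/-- an eigenvector for each diagonal entry of an upper triangular matrix -/
lemma exists_eigvec (A : Matrix (Fin n) (Fin n) ℂ)
    (hupper : ∀ i j : Fin n, (j : ℕ) < (i : ℕ) → A i j = 0) (t : Fin n) :
    ∃ u : Fin n → ℂ, u ≠ 0 ∧ A *ᵥ u = A t t • u := by
  classical
  set M : Matrix (Fin n) (Fin n) ℂ := A - A t t • 1 with hM
  have hdet : M.det = 0 := by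
    have htri : M.BlockTriangular id := by
      intro i j hij
      have hij' : (j : ℕ) < (i : ℕ) := hij
      have hne : i ≠ j := fun he => by rw [he] at hij'; omega
      simp [hM, hupper i j hij', Matrix.one_apply_ne hne]
    rw [Matrix.det_of_upperTriangular htri]
    apply Finset.prod_eq_zero (Finset.mem_univ t)
    simp [hM]
  obtain ⟨u, hu0, hu⟩ := (Matrix.exists_mulVec_eq_zero_iff).mpr hdet
  refine ⟨u, hu0, ?_⟩
  rw [hM, Matrix.sub_mulVec] at hu
  have := sub_eq_zero.mp hu
  rw [this]
  simp [Matrix.smul_mulVec, Matrix.one_mulVec]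

/-- Fitting decomposition for an upper triangular matrix with two distinct
diagonal entries. -/
lemma fitting_decomp (hn : 0 < n) (A : Matrix (Fin n) (Fin n) ℂ)
    (hupper : ∀ i j : Fin n, (j : ℕ) < (i : ℕ) → A i j = 0)
    (i0 j0 : Fin n) (hij : A i0 i0 ≠ A j0 j0) :
    ∃ V W : Submodule ℂ (Fin n → ℂ), IsCompl V W ∧ V ≠ ⊥ ∧ W ≠ ⊥ ∧
      (∀ x ∈ V, A *ᵥ x ∈ V) ∧ (∀ x ∈ W, A *ᵥ x ∈ W) := by
  classical
  set μ : ℂ := A i0 i0 with hμ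
  set N : Matrix (Fin n) (Fin n) ℂ := A - μ • 1 with hN
  set f : Module.End ℂ (Fin n → ℂ) := N.mulVecLin with hf
  have hfp : ∀ j : ℕ, ∀ x, (f ^ j) x = (N ^ j) *ᵥ x := by
    intro j
    induction j with
    | zero => intro x; simp
    | succ j ih =>
      intro x
      rw [pow_succ, pow_succ, Module.End.mul_apply, ih, hf, Matrix.mulVecLin_apply,
        ← Matrix.mulVec_mulVec]
  have hdom : Module.finrank ℂ (Fin n → ℂ) = n := by
    simp [Module.finrank_fintype_fun_eq_card]
  set V : Submodule ℂ (Fin n → ℂ) := LinearMap.ker (f ^ n) with hV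
  set W : Submodule ℂ (Fin n → ℂ) := LinearMap.range (f ^ n) with hW
  -- f commutes with A
  have hNA : ∀ x, N *ᵥ (A *ᵥ x) = A *ᵥ (N *ᵥ x) := by
    intro x
    rw [Matrix.mulVec_mulVec, Matrix.mulVec_mulVec]
    congr 1
    rw [hN]
    simp only [Matrix.sub_mul, Matrix.mul_sub, Matrix.smul_mul, Matrix.mul_smul,
      Matrix.one_mul, Matrix.mul_one]
  have hNAm : N * A = A * N := by
    rw [hN]
    simp only [Matrix.sub_mul, Matrix.mul_sub, Matrix.smul_mul, Matrix.mul_smul,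
      Matrix.one_mul, Matrix.mul_one]
  have hcom : ∀ j : ℕ, N ^ j * A = A * N ^ j := by
    intro j
    induction j with
    | zero => simp
    | succ j ih => rw [pow_succ, Matrix.mul_assoc, hNAm, ← Matrix.mul_assoc, ih,
        Matrix.mul_assoc]
  have hfA : ∀ j : ℕ, ∀ x, (f ^ j) (A *ᵥ x) = A *ᵥ ((f ^ j) x) := by
    intro j x
    rw [hfp, hfp, Matrix.mulVec_mulVec, Matrix.mulVec_mulVec, hcom]
  -- disjointness via stabilization of kernels
  have hker2n : LinearMap.ker (f ^ (2 * n)) = LinearMap.ker (f ^ n) := by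
    have h1 := Module.End.ker_pow_eq_ker_pow_finrank_of_le (f := f) (m := 2 * n)
      (by rw [hdom]; omega)
    have h2 := Module.End.ker_pow_eq_ker_pow_finrank_of_le (f := f) (m := n)
      (by rw [hdom])
    rw [h1, h2]
  have hdisj : Disjoint V W := by
    rw [Submodule.disjoint_def]
    intro x hxV hxW
    obtain ⟨y, rfl⟩ := hxW
    have : y ∈ LinearMap.ker (f ^ (2 * n)) := by
      rw [LinearMap.mem_ker]
      have : (f ^ (2 * n)) y = (f ^ n) ((f ^ n) y) := by
        rw [← Module.End.mul_apply, ← pow_add]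
        congr 2
        omega
      rw [this]
      exact hxV
    rw [hker2n, LinearMap.mem_ker] at this
    rw [this]
  have htop : V ⊔ W = ⊤ := by
    apply Submodule.eq_top_of_finrank_eq
    have hsum := Submodule.finrank_sup_add_finrank_inf_eq V W
    rw [hdisj.eq_bot] at hsum
    simp only [finrank_bot, add_zero] at hsum
    have hrn := LinearMap.finrank_range_add_finrank_ker (f ^ n)
    have hle : Module.finrank ℂ ((V ⊔ W : Submodule ℂ (Fin n → ℂ))) ≤
        Module.finrank ℂ (Fin n → ℂ) := Submodule.finrank_le _
    rw [hV, hW] at hsum ⊢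
    omega
  have hcompl : IsCompl V W := ⟨hdisj, codisjoint_iff.mpr htop⟩
  -- V contains an eigenvector of μ
  have hpow0 : ∀ x, N *ᵥ x = 0 → (f ^ n) x = 0 := by
    intro x hx
    have : f ^ n = f ^ (n - 1) * f := by
      rw [← pow_succ]
      congr 1
      omega
    rw [this, Module.End.mul_apply, hf, Matrix.mulVecLin_apply, hx, map_zero]
  obtain ⟨u, hu0, hu⟩ := exists_eigvec A hupper i0
  have hNu : N *ᵥ u = 0 := by
    rw [hN, Matrix.sub_mulVec, hu, Matrix.smul_mulVec, Matrix.one_mulVec, hμ, sub_self]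
  have hVbot : V ≠ ⊥ := by
    intro h
    have hmem : u ∈ V := by
      rw [hV, LinearMap.mem_ker]
      exact hpow0 u hNu
    rw [h, Submodule.mem_bot] at hmem
    exact hu0 hmem
  -- W contains an eigenvector of ν
  obtain ⟨u2, hu20, hu2⟩ := exists_eigvec A hupper j0
  set ν : ℂ := A j0 j0 with hν
  have hNu2 : N *ᵥ u2 = (ν - μ) • u2 := by
    rw [hN, Matrix.sub_mulVec, hu2, Matrix.smul_mulVec, Matrix.one_mulVec, sub_smul]
  have hfu2 : ∀ j : ℕ, (f ^ j) u2 = (ν - μ) ^ j • u2 := by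
    intro j
    induction j with
    | zero => simp
    | succ j ih =>
      rw [pow_succ', Module.End.mul_apply, ih, _root_.map_smul, hf, Matrix.mulVecLin_apply, hNu2,
        smul_smul, ← pow_succ]
  have hWbot : W ≠ ⊥ := by
    intro h
    have hmem : (f ^ n) u2 ∈ W := by
      rw [hW]
      exact ⟨u2, rfl⟩
    rw [h, Submodule.mem_bot, hfu2, smul_eq_zero] at hmem
    rcases hmem with h1 | h1
    · exact pow_ne_zero n (sub_ne_zero.mpr (by rw [hν, hμ]; exact Ne.symm hij)) h1
    · exact hu20 h1
  -- invariance
  have hVinv : ∀ x ∈ V, A *ᵥ x ∈ V := by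
    intro x hx
    rw [hV, LinearMap.mem_ker] at hx ⊢
    rw [hfA, hx, Matrix.mulVec_zero]
  have hWinv : ∀ x ∈ W, A *ᵥ x ∈ W := by
    intro x hx
    rw [hW] at hx ⊢
    obtain ⟨y, rfl⟩ := hx
    exact ⟨A *ᵥ y, hfA n y⟩
  exact ⟨V, W, hcompl, hVbot, hWbot, hVinv, hWinv⟩

/-- The `n×n` Jordan block with eigenvalue `α` (not needed here, but kept for context). -/
theorem stmt_0 (n : ℕ) (hn : 0 < n) (A : Matrix (Fin n) (Fin n) ℂ)
    (hupper : ∀ i j : Fin n, (j : ℕ) < (i : ℕ) → A i j = 0) :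
    (∀ X : Matrix (Fin n) (Fin n) ℂ, IsUnit X →
      ∀ P : Matrix (Fin n) (Fin n) ℂ, P * P = P → P.conjTranspose = P →
        (X * A * X⁻¹) * P = P * (X * A * X⁻¹) → P = 0 ∨ P = 1) ↔
    ((∀ i j : Fin n, A i i = A j j) ∧
      ∀ i : Fin n, ∀ h : (i : ℕ) + 1 < n, A i ⟨(i : ℕ) + 1, h⟩ ≠ 0) := by
  classical
  constructor
  · intro hSI
    have hdiag : ∀ i j : Fin n, A i i = A j j := by
      by_contra h
      push_neg at h
      obtain ⟨i0, j0, hij⟩ := h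
      obtain ⟨V, W, hc, hV, hW, hAV, hAW⟩ := fitting_decomp hn A hupper i0 j0 hij
      obtain ⟨X, hX, P, h1, h2, h3, h4⟩ := not_SI_of_decomp A V W hc hV hW hAV hAW
      exact h4 (hSI X hX P h1 h2 h3)
    refine ⟨hdiag, ?_⟩
    intro k hk1
    by_contra hzero
    set a0 : Fin n := ⟨0, hn⟩ with ha0
    set α : ℂ := A a0 a0 with hα
    set N : Matrix (Fin n) (Fin n) ℂ := A - α • 1 with hN
    have hNs : ∀ i j : Fin n, (j : ℕ) ≤ (i : ℕ) → N i j = 0 := by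
      intro i j hij
      rcases Nat.lt_or_ge (j : ℕ) (i : ℕ) with h | h
      · have hne : i ≠ j := fun he => by rw [he] at h; omega
        simp [hN, hupper i j h, Matrix.one_apply_ne hne]
      · have : i = j := Fin.ext (by omega)
        subst this
        simp [hN, hα, hdiag i a0]
    have hNk : N k ⟨(k : ℕ) + 1, hk1⟩ = 0 := by
      have hne : k ≠ (⟨(k : ℕ) + 1, hk1⟩ : Fin n) := fun he => by
        have := congrArg Fin.val he; simp at this
      simp [hN, Matrix.one_apply_ne hne, hzero]
    have hN1 : N ^ (n - 1) = 0 := by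
      ext i j
      simp only [Matrix.zero_apply]
      rcases Nat.lt_or_ge (j : ℕ) ((i : ℕ) + (n - 1)) with h | h
      · exact pow_entry_zero N hNs (n - 1) i j h
      · have hi0 : (i : ℕ) = 0 := by have := j.isLt; omega
        have hjn : (j : ℕ) = n - 1 := by have := j.isLt; omega
        apply pow_entry_zero_cross N hNs k hk1 hNk (n - 1) i j
        · omega
        · have := k.isLt; omega
        · omega
    have hexm : ∃ m : ℕ, N ^ m = 0 := ⟨n - 1, hN1⟩
    set m := Nat.find hexm with hm
    have hm0 : N ^ m = 0 := Nat.find_spec hexm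
    have hmle : m ≤ n - 1 := Nat.find_min' hexm hN1
    have hm1 : 1 ≤ m := by
      by_contra h
      have : m = 0 := by omega
      rw [this, pow_zero] at hm0
      have := congrFun (congrFun hm0 a0) a0
      rw [Matrix.one_apply_eq] at this
      simp at this
    have hmpred : N ^ (m - 1) ≠ 0 := Nat.find_min hexm (by omega)
    have hmn : m < n := by omega
    obtain ⟨V, W, hc, hV, hW, hNV, hNW⟩ := cyclic_decomp N m hm1 hmn hm0 hmpred
    have hAvec : ∀ x, A *ᵥ x = N *ᵥ x + α • x := by
      intro x
      rw [hN, Matrix.sub_mulVec, Matrix.smul_mulVec, Matrix.one_mulVec]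
      abel
    have hAV : ∀ x ∈ V, A *ᵥ x ∈ V := fun x hx => by
      rw [hAvec]; exact Submodule.add_mem _ (hNV x hx) (Submodule.smul_mem _ _ hx)
    have hAW : ∀ x ∈ W, A *ᵥ x ∈ W := fun x hx => by
      rw [hAvec]; exact Submodule.add_mem _ (hNW x hx) (Submodule.smul_mem _ _ hx)
    obtain ⟨X, hX, P, h1, h2, h3, h4⟩ := not_SI_of_decomp A V W hc hV hW hAV hAW
    exact h4 (hSI X hX P h1 h2 h3)
  · rintro ⟨hdiag, hsuper⟩ X hX P hPP hPH hPcomm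
    have hXdet := (Matrix.isUnit_iff_isUnit_det X).mp hX
    have hXX : X * X⁻¹ = 1 := Matrix.mul_nonsing_inv X hXdet
    have hXX' : X⁻¹ * X = 1 := Matrix.nonsing_inv_mul X hXdet
    set E : Matrix (Fin n) (Fin n) ℂ := X⁻¹ * P * X with hE
    have hEE : E * E = E := by
      rw [hE]
      calc (X⁻¹ * P * X) * (X⁻¹ * P * X) = X⁻¹ * (P * (X * X⁻¹) * P) * X := by
            simp only [Matrix.mul_assoc]
        _ = X⁻¹ * P * X := by rw [hXX, Matrix.mul_one, hPP, Matrix.mul_assoc]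
    have hAE : A * E = E * A := by
      have h2 : X⁻¹ * ((X * A * X⁻¹) * P) * X = A * E := by
        rw [hE]
        simp only [Matrix.mul_assoc]
        rw [← Matrix.mul_assoc X⁻¹ X, hXX', Matrix.one_mul]
      have h3 : X⁻¹ * (P * (X * A * X⁻¹)) * X = E * A := by
        rw [hE]
        simp only [Matrix.mul_assoc]
        rw [hXX', Matrix.mul_one]
      rw [← h2, ← h3, hPcomm]
    have hPE : P = X * E * X⁻¹ := by
      rw [hE]
      simp only [Matrix.mul_assoc]
      rw [hXX, Matrix.mul_one, ← Matrix.mul_assoc, hXX, Matrix.one_mul]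
    rcases idem_trivial hn A hupper hdiag hsuper E hEE hAE with h | h
    · left
      rw [hPE, h, Matrix.mul_zero, Matrix.zero_mul]
    · right
      rw [hPE, h, Matrix.mul_one, hXX]
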